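/- arXiv:2405.19918 — 2 statements merged into one kernel-verified Lean document; each statement's English description precedes it below -/
import Mathlib

section
/- For k ≥ r ≥ 3, p,t ≥ 0 and N₂ ≥ 0, if π is a partition in C_<(k,r|p,t) such that there are exactly N₂ parts marked with 2 in GG(π), then p + t ≥ N₂. -/
namespace Bressoud

/-- A partition: a weakly decreasing list of positive integers. -/
structure Partition where
  parts : List ℕ
  pos : ∀ x ∈ parts, 0 < x
  sorted : parts.Pairwise (· ≥ ·)

namespace Partition

/-- `|π|`, the sum of the parts of `π`. -/
def size (π : Partition) : ℕ := π.parts.sum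

/-- `ℓ(π)`, the number of parts of `π`. -/
def numParts (π : Partition) : ℕ := π.parts.length

end Partition

lemma exists_pos_not_mem (s : List ℕ) : ∃ n, 0 < n ∧ n ∉ s := by
  refine ⟨s.sum + 1, Nat.succ_pos _, fun h => ?_⟩
  have := List.single_le_sum (l := s) (fun x _ => Nat.zero_le x) _ h
  omega

/-- The least positive integer not occurring in `s`. -/
def mex1 (s : List ℕ) : ℕ := Nat.find (exists_pos_not_mem s)

/-- Parts `p ≥ q` conflict (must receive different marks) when `p - q ≤ 2`,
with strict inequality when `p` is odd. -/
def conflict (p q : ℕ) : Bool :=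
  if p % 2 = 1 then decide (p - q < 2) else decide (p - q ≤ 2)

/-- Greedy computation of the Göllnitz–Gordon marking: the parts are processed
from smallest to largest (second argument: remaining parts in increasing
order; first argument: already processed parts with their marks), and each
part receives the least positive mark different from the marks of all already
processed conflicting parts. -/
def ggAux : List (ℕ × ℕ) → List ℕ → List (ℕ × ℕ)
  | acc, [] => acc
  | acc, p :: rest =>
      ggAux ((p, mex1 ((acc.filter fun q => conflict p q.1).map Prod.snd)) :: acc) rest

/-- The Göllnitz–Gordon marking `GG(π)` of `π`, as a list of (part, mark)
pairs in decreasing order of parts. -/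
def ggMarks (π : Partition) : List (ℕ × ℕ) := ggAux [] π.parts.reverse

/-- There is an `m`-marked part equal to `x` in `GG(π)`. -/
def Marked (π : Partition) (x m : ℕ) : Prop := (x, m) ∈ ggMarks π

instance (π : Partition) (x m : ℕ) : Decidable (Marked π x m) := by
  unfold Marked; infer_instance

/-- The `i`-th row of `GG(π)`: the `i`-marked parts, in decreasing order. -/
def row (π : Partition) (i : ℕ) : List ℕ :=
  ((ggMarks π).filter fun q => q.2 == i).map Prod.fst

/-- `N_i(π)`: the number of `i`-marked parts of `π`. -/
def Nmk (π : Partition) (i : ℕ) : ℕ := (row π i).length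

/-- `π^{(i)}_j` as a natural number (meaningful for `1 ≤ j ≤ N_i(π)`;
junk value `0` otherwise). -/
def nth (π : Partition) (i j : ℕ) : ℕ := (row π i).getD (j - 1) 0

/-- The canonical embedding of the natural numbers into `EReal`. -/
noncomputable def natE (n : ℕ) : EReal := ((n : ℝ) : EReal)

/-- `π^{(i)}_j` as an extended real, with the conventions `π^{(i)}_0 = +∞`
and `π^{(i)}_j = -∞` for `j > N_i(π)`. -/
noncomputable def rowVal (π : Partition) (i j : ℕ) : EReal :=
  if j = 0 then ⊤
  else
    match (row π i)[j - 1]? with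
    | some x => natE x
    | none => ⊥

/-- The largest `l ≥ 0` such that there is no odd part of `π` greater than or
equal to `π^{(2)}_l` (the indices `1 ≤ j ≤ N₂(π)` with this property form an
initial segment, so this is also their number). -/
def bigL (π : Partition) : ℕ :=
  ((List.range' 1 (Nmk π 2)).filter fun j =>
    decide (∀ x ∈ π.parts, x % 2 = 1 → x < nth π 2 j)).length

/-- `startPair π b = (starting type of π^{(2)}_b, s_b(π))` for `1 ≤ b ≤ N₂(π)`.
Starting types are encoded by integers: `-1` stands for `s₋₁`, and `0,1,2,3`
for `s₀,s₁,s₂,s₃`; the value `9` is a junk value used when no case applies. -/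
def startPair (π : Partition) : ℕ → ℤ × ℕ
  | 0 => (9, 0)
  | b + 1 =>
    let v := nth π 2 (b + 1)
    if bigL π < b + 1 then (-1, 0)
    else
      let okLow : Bool :=
        if b = 0 then !decide ((v + 2) ∈ π.parts)
        else !decide (Marked π (v + 2) 1) || decide ((startPair π b).2 = v + 2)
      let ok2 : Bool :=
        if b = 0 then decide (Marked π (v + 2) 1)
        else decide (Marked π (v + 2) 1) && !decide ((startPair π b).2 = v + 2)
      if decide (Marked π (v - 1) 1) && okLow then (0, v - 1)
      else if decide (Marked π (v - 2) 1) && okLow then (1, v - 2)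
      else if ok2 then (2, v + 2)
      else if decide (Marked π v 1) then (3, v)
      else (9, 0)

/-- The starting type of `π^{(2)}_b`, encoded as an integer. -/
def startType (π : Partition) (b : ℕ) : ℤ := (startPair π b).1

/-- The set `C(k,r)`: partitions with no repeated odd part, in which the parts
equal to `1` and `2` have marks at most `r - 1`, and whose Göllnitz–Gordon
marking has at most `k - 1` rows. -/
def C (k r : ℕ) : Set Partition :=
  { π | (∀ x, x % 2 = 1 → π.parts.count x ≤ 1) ∧
        (∀ x m, Marked π x m → x ≤ 2 → m ≤ r - 1) ∧
        (∀ x m, Marked π x m → m ≤ k - 1) }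

/-- The set `C_<(k,r|p,t)`. -/
noncomputable def Clt (k r p t : ℕ) : Set Partition :=
  { π | π ∈ C k r ∧
        (∀ x ∈ π.parts, x % 2 = 1 → x < 2 * t + 1) ∧
        rowVal π 2 (p + 1) < natE (2 * t + 1) ∧
        natE (2 * t + 1) < rowVal π 2 p ∧
        (rowVal π 2 p = natE (2 * t + 2) →
          startType π p = 2 ∨ startType π p = 3) ∧
        (rowVal π 2 (p + 1) = natE (2 * t) →
          startType π (p + 1) = 0 ∨ startType π (p + 1) = 1) }

/-- The set `C_=(k,r|p,t)`. -/
noncomputable def Ceq (k r p t : ℕ) : Set Partition :=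
  { π | π ∈ C k r ∧
        (2 * t + 1) ∈ π.parts ∧
        (∀ x ∈ π.parts, x % 2 = 1 → x ≤ 2 * t + 1) ∧
        (∀ m, Marked π (2 * t + 1) m → m ≤ 2) ∧
        natE (2 * t + 2) ≤ rowVal π 2 p ∧
        rowVal π 2 (p + 1) ≤ natE (2 * t + 2) ∧
        ((∃ j, 1 ≤ j ∧ j ≤ Nmk π 2 ∧ nth π 2 j = 2 * t + 2 ∧ startType π j = 0) →
          rowVal π 2 (p + 1) = natE (2 * t + 2) ∧
          ∃ i, 1 ≤ i ∧ i ≤ p + 1 ∧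
            nth π 2 i = 2 * t + 2 + 4 * (p + 1 - i) ∧
            π.parts.count (2 * t + 2 + 4 * (p + 1 - i)) = 1) ∧
        ((∃ j, 1 ≤ j ∧ j ≤ Nmk π 2 ∧ nth π 2 j = 2 * t + 2 ∧ startType π j = 2) →
          rowVal π 2 p = natE (2 * t + 2)) ∧
        ((2 * t + 2) ∈ π.parts → ¬ Marked π (2 * t + 2) 2 →
          rowVal π 2 p = natE (2 * t + 4) ∧ startType π p = 3 ∧
          ∃ i, 1 ≤ i ∧ i ≤ p ∧
            nth π 2 i = 2 * t + 4 + 4 * (p - i) ∧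
            (2 * t + 4 + 4 * (p - i) + 2) ∉ π.parts) }

/-- The first starting cluster index `p₁` of `π` (with `p₀ = p + 1`): the least
`j ≥ 1` such that `π^{(2)}_j = π^{(2)}_p + 4(p - j)` and all of
`π^{(2)}_j, …, π^{(2)}_p` have the same starting type as `π^{(2)}_p`. -/
def firstCluster (π : Partition) (p : ℕ) : ℕ :=
  ((List.range' 1 p).filter fun j =>
    (List.range' j (p + 1 - j)).all fun i =>
      decide (nth π 2 i = nth π 2 p + 4 * (p - i)) &&
      decide (startType π i = startType π p)).headD p

/-- The set `ℰ(k,r)` of partitions in `C(k,r)` with no odd parts. -/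
def E (k r : ℕ) : Set Partition :=
  { π | π ∈ C k r ∧ ∀ x ∈ π.parts, x % 2 = 0 }

/-- `C_<(k,r|m) = ⋃_{p+t=m} C_<(k,r|p,t)`. -/
noncomputable def Cltm (k r m : ℕ) : Set Partition :=
  { π | ∃ p t, p + t = m ∧ π ∈ Clt k r p t }

/-- `C_=(k,r|m) = ⋃_{p+t=m} C_=(k,r|p,t)`. -/
noncomputable def Ceqm (k r m : ℕ) : Set Partition :=
  { π | ∃ p t, p + t = m ∧ π ∈ Ceq k r p t }

/-- `I_N`: partitions into distinct odd parts, each at least `2N + 1`. -/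
def Iset (N : ℕ) : Set Partition :=
  { ζ | (∀ x ∈ ζ.parts, x % 2 = 1 ∧ 2 * N + 1 ≤ x) ∧ ζ.parts.Nodup }

/-- `F(3,3)`: pairs `(π, ζ)` with `π ∈ ℰ(3,3)` and `ζ ∈ I_{N₂(π)}`. -/
noncomputable def F33 : Set (Partition × Partition) :=
  { pq | pq.1 ∈ E 3 3 ∧ pq.2 ∈ Iset (Nmk pq.1 2) }



lemma mex1_not_mem (s : List ℕ) : mex1 s ∉ s :=
  (Nat.find_spec (exists_pos_not_mem s)).2

/-- Pairwise property of the marking: conflicting parts get distinct marks. -/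
def Pmk : ℕ × ℕ → ℕ × ℕ → Prop := fun a b => conflict a.1 b.1 = true → a.2 ≠ b.2

lemma ggAux_pairwise (l : List ℕ) :
    ∀ acc : List (ℕ × ℕ), acc.Pairwise Pmk → (ggAux acc l).Pairwise Pmk := by
  induction l with
  | nil => intro acc h; exact h
  | cons p rest ih =>
    intro acc h
    apply ih
    refine List.pairwise_cons.2 ⟨?_, h⟩
    intro b hb hc heq
    have hmem : b.2 ∈ (acc.filter fun q => conflict p q.1).map Prod.snd :=
      List.mem_map_of_mem (List.mem_filter.2 ⟨hb, hc⟩)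
    exact mex1_not_mem _ (heq ▸ hmem)

lemma ggAux_map_fst (l : List ℕ) :
    ∀ acc : List (ℕ × ℕ), (ggAux acc l).map Prod.fst = l.reverse ++ acc.map Prod.fst := by
  induction l with
  | nil => intro acc; simp [ggAux]
  | cons p rest ih => intro acc; simp [ggAux, ih]

lemma ggMarks_map_fst (π : Partition) : (ggMarks π).map Prod.fst = π.parts := by
  simp [ggMarks, ggAux_map_fst]

lemma conflict_false {x y : ℕ} (h : conflict x y = false) : y + 2 ≤ x := by
  unfold conflict at h
  split at h <;> simp at h <;> omega

lemma row_pairwise (π : Partition) (i : ℕ) :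
    (row π i).Pairwise (fun x y => y + 2 ≤ x) := by
  have hP : (ggMarks π).Pairwise Pmk := ggAux_pairwise _ [] (by simp)
  have hF : ((ggMarks π).filter fun q => q.2 == i).Pairwise Pmk :=
    hP.sublist List.filter_sublist
  rw [row, List.pairwise_map]
  refine hF.imp_of_mem ?_
  intro a b ha hb hab
  have ha2 : a.2 = i := by simpa using (List.mem_filter.1 ha).2
  have hb2 : b.2 = i := by simpa using (List.mem_filter.1 hb).2
  by_cases hc : conflict a.1 b.1
  · exact absurd (ha2.trans hb2.symm) (hab hc)
  · exact conflict_false (by simpa using hc)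

lemma row_sublist (π : Partition) (i : ℕ) : (row π i).Sublist π.parts := by
  have : (((ggMarks π).filter fun q => q.2 == i).map Prod.fst).Sublist
      ((ggMarks π).map Prod.fst) := List.filter_sublist.map _
  rwa [ggMarks_map_fst] at this

lemma row_pos (π : Partition) {i x : ℕ} (hx : x ∈ row π i) : 0 < x :=
  π.pos x ((row_sublist π i).subset hx)

lemma bound_lemma : ∀ (l : List ℕ) (t : ℕ), l.Pairwise (fun a b => b + 2 ≤ a) →
    (∀ x ∈ l, 0 < x) → (∀ x ∈ l, x ≤ 2 * t) → l.length ≤ t := by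
  intro l
  induction l with
  | nil => intro t _ _ _; simp
  | cons a l ih =>
    intro t hp hpos hle
    obtain ⟨hrel, hp'⟩ := List.pairwise_cons.1 hp
    have ha := hle a (by simp)
    have ha0 := hpos a (by simp)
    have h1 : l.length ≤ t - 1 := by
      refine ih (t - 1) hp' (fun x hx => hpos x (by simp [hx])) ?_
      intro x hx
      have := hrel x hx
      omega
    simp only [List.length_cons]
    omega

/-- Proposition 2.4: if `π ∈ C_<(k,r|p,t)` has `N₂` parts marked `2`,
then `p + t ≥ N₂`. -/
theorem Clt_ge_N2 (k r p t N₂ : ℕ) (hrk : r ≤ k) (hr : 3 ≤ r)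
    (π : Partition) (hπ : π ∈ Clt k r p t) (hN : Nmk π 2 = N₂) :
    N₂ ≤ p + t := by
  obtain ⟨hC, hodd, hlt, hgt, hs1, hs2⟩ := hπ
  by_cases hp : Nmk π 2 ≤ p
  · omega
  push_neg at hp
  have hplt : p < (row π 2).length := by simpa [Nmk] using hp
  rcases hsome : (row π 2)[p]? with _ | x
  · rw [List.getElem?_eq_none_iff] at hsome; omega
  have hlt' : natE ((row π 2)[p]'hplt) < natE (2 * t + 1) := by
    have hx : (row π 2)[p]'hplt = x := by
      have := List.getElem?_eq_some_iff.1 hsome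
      obtain ⟨h1, h2⟩ := this
      exact h2
    rw [hx]
    simpa [rowVal, hsome] using hlt
  have hxle : ((row π 2)[p]'hplt) ≤ 2 * t := by
    have := hlt'
    simp only [natE, EReal.coe_lt_coe_iff] at this
    exact_mod_cast Nat.lt_succ_iff.1 (by exact_mod_cast this)
  have hdrop : (row π 2).drop p = ((row π 2)[p]'hplt) :: (row π 2).drop (p + 1) :=
    List.drop_eq_getElem_cons hplt
  have hpw : ((row π 2).drop p).Pairwise (fun a b => b + 2 ≤ a) :=
    (row_pairwise π 2).sublist (List.drop_sublist _ _)
  have hlen : ((row π 2).drop p).length ≤ t := by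
    refine bound_lemma _ t hpw (fun y hy => row_pos π (List.mem_of_mem_drop hy)) ?_
    intro y hy
    rw [hdrop] at hy hpw
    rcases List.mem_cons.1 hy with rfl | hy'
    · exact hxle
    · have := (List.pairwise_cons.1 hpw).1 y hy'
      omega
  have : (row π 2).length - p ≤ t := by simpa using hlen
  simp only [Nmk] at hN
  omega


end Bressoud
end

section
/- For k ≥ r ≥ 3 and p,t ≥ 0, if π is a partition in C_<(k,r|p,t) such that π^{(2)}_p ≥ 2t+6, then every part of π equal to 2t+2 or 2t+4 has mark at most 1 in GG(π), i.e., the marks of parts 2t+2 and 2t+4 are at most 1 in GG(π). -/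
namespace Bressoud

/-! ### Auxiliary lemmas for Lemma 2.6 -/

lemma mex1_pos (s : List ℕ) : 0 < mex1 s := (Nat.find_spec (exists_pos_not_mem s)).1

lemma mem_of_lt_mex1 {s : List ℕ} {i : ℕ} (h1 : 0 < i) (h2 : i < mex1 s) : i ∈ s := by
  by_contra h
  exact Nat.find_min (exists_pos_not_mem s) h2 ⟨h1, h⟩

lemma subset_ggAux : ∀ (l : List ℕ) (acc : List (ℕ × ℕ)), acc ⊆ ggAux acc l := by
  intro l
  induction l with
  | nil => intro acc; rw [ggAux]; exact fun _ h => h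
  | cons p rest ih =>
      intro acc
      rw [ggAux]
      exact fun e he => ih _ (List.mem_cons_of_mem _ he)

lemma mem_of_mem_ggAux : ∀ (l : List ℕ) (acc : List (ℕ × ℕ)) {x m : ℕ},
    (x, m) ∈ ggAux acc l → (x, m) ∈ acc ∨ x ∈ l := by
  intro l
  induction l with
  | nil => intro acc x m h; rw [ggAux] at h; exact Or.inl h
  | cons p rest ih =>
      intro acc x m h
      rw [ggAux] at h
      rcases ih _ h with h' | h'
      · rcases List.mem_cons.mp h' with h'' | h''
        · injection h'' with h1 h2
          exact Or.inr (by simp [h1])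
        · exact Or.inl h''
      · exact Or.inr (List.mem_cons_of_mem _ h')

lemma ggAux_map_fst_sorted : ∀ (l : List ℕ) (acc : List (ℕ × ℕ)),
    l.Pairwise (· ≤ ·) → (acc.map Prod.fst).Pairwise (· ≥ ·) →
    (∀ q ∈ acc.map Prod.fst, ∀ a ∈ l, q ≤ a) →
    ((ggAux acc l).map Prod.fst).Pairwise (· ≥ ·) := by
  intro l
  induction l with
  | nil => intro acc _ h _; rw [ggAux]; exact h
  | cons p rest ih =>
      intro acc hl hacc hle
      rw [ggAux]
      apply ih
      · exact (List.pairwise_cons.mp hl).2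
      · simp only [List.map_cons]
        exact List.pairwise_cons.mpr ⟨fun q hq => hle q hq p (List.mem_cons_self), hacc⟩
      · intro q hq a ha
        simp only [List.map_cons, List.mem_cons] at hq
        rcases hq with rfl | hq
        · exact (List.pairwise_cons.mp hl).1 a ha
        · exact hle q hq a (List.mem_cons_of_mem _ ha)

/-- Two entries of the marking such that the (earlier, larger) one conflicts
with the (later, smaller) one get different marks. -/
def GoodR (u v : ℕ × ℕ) : Prop := conflict u.1 v.1 = true → u.2 ≠ v.2

lemma ggAux_good : ∀ (l : List ℕ) (acc : List (ℕ × ℕ)),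
    acc.Pairwise GoodR → (ggAux acc l).Pairwise GoodR := by
  intro l
  induction l with
  | nil => intro acc h; rw [ggAux]; exact h
  | cons p rest ih =>
      intro acc hacc
      rw [ggAux]
      apply ih
      refine List.pairwise_cons.mpr ⟨?_, hacc⟩
      intro v hv hc he
      have hc' : conflict p v.1 = true := hc
      have he' : mex1 ((acc.filter fun q => conflict p q.1).map Prod.snd) = v.2 := he
      apply mex1_not_mem ((acc.filter fun q => conflict p q.1).map Prod.snd)
      rw [he']
      exact List.mem_map.mpr ⟨v, List.mem_filter.mpr ⟨hv, by simpa using hc'⟩, rfl⟩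

lemma ggAux_complete : ∀ (l : List ℕ) (acc : List (ℕ × ℕ)), l.Pairwise (· ≤ ·) →
    (∀ e ∈ acc, ∀ a ∈ l, e.1 ≤ a) →
    ∀ x m, (x, m) ∈ ggAux acc l →
      (x, m) ∈ acc ∨
        ∀ i, 0 < i → i < m → ∃ q, q ≤ x ∧ conflict x q = true ∧ (q, i) ∈ ggAux acc l := by
  intro l
  induction l with
  | nil => intro acc _ _ x m h; rw [ggAux] at h; exact Or.inl h
  | cons p rest ih =>
      intro acc hl hle x m h
      rw [ggAux] at h
      have hle' : ∀ e ∈ ((p, mex1 ((acc.filter fun q => conflict p q.1).map Prod.snd)) :: acc),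
          ∀ a ∈ rest, e.1 ≤ a := by
        intro e he a ha
        rcases List.mem_cons.mp he with rfl | he
        · exact (List.pairwise_cons.mp hl).1 a ha
        · exact hle e he a (List.mem_cons_of_mem _ ha)
      rcases ih _ (List.pairwise_cons.mp hl).2 hle' x m h with h' | h'
      · rcases List.mem_cons.mp h' with h'' | h''
        · injection h'' with hxp hxm
          right
          intro i hi1 hi2
          have hiS : i ∈ (acc.filter fun q => conflict p q.1).map Prod.snd :=
            mem_of_lt_mex1 hi1 (by omega)
          obtain ⟨⟨q0, i0⟩, hef, hei⟩ := List.mem_map.mp hiS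
          have hei' : i0 = i := hei
          subst hei'
          have heacc := (List.mem_filter.mp hef).1
          have hconf : conflict p q0 = true := by simpa using (List.mem_filter.mp hef).2
          refine ⟨q0, ?_, ?_, ?_⟩
          · rw [hxp]; exact hle _ heacc p (List.mem_cons_self)
          · rw [hxp]; exact hconf
          · rw [ggAux]; exact subset_ggAux rest _ (List.mem_cons_of_mem _ heacc)
        · exact Or.inl h''
      · right
        intro i hi1 hi2
        obtain ⟨q, h1, h2, h3⟩ := h' i hi1 hi2
        exact ⟨q, h1, h2, by rw [ggAux]; exact h3⟩

lemma parts_reverse_sorted (π : Partition) : π.parts.reverse.Pairwise (· ≤ ·) :=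
  List.pairwise_reverse.mpr π.sorted

lemma marked_mem_parts {π : Partition} {x m : ℕ} (h : Marked π x m) : x ∈ π.parts := by
  unfold Marked ggMarks at h
  rcases mem_of_mem_ggAux _ _ h with h' | h'
  · simp at h'
  · exact List.mem_reverse.mp h'

lemma ggMarks_sorted (π : Partition) : ((ggMarks π).map Prod.fst).Pairwise (· ≥ ·) :=
  ggAux_map_fst_sorted _ _ (parts_reverse_sorted π) (by simp) (by simp)

lemma row_sorted (π : Partition) (i : ℕ) : (row π i).Pairwise (· ≥ ·) := by
  have h := ggMarks_sorted π
  have hsub : List.Sublist (((ggMarks π).filter (fun q => q.2 == i)).map Prod.fst)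
      ((ggMarks π).map Prod.fst) :=
    List.Sublist.map _ List.filter_sublist
  exact h.sublist hsub

lemma marked_mem_row {π : Partition} {x i : ℕ} (h : Marked π x i) : x ∈ row π i := by
  unfold row
  exact List.mem_map.mpr ⟨(x, i), List.mem_filter.mpr ⟨h, by simp⟩, rfl⟩

lemma ggMarks_good (π : Partition) : (ggMarks π).Pairwise GoodR :=
  ggAux_good _ _ (by simp)

lemma marked_complete {π : Partition} {x m : ℕ} (h : Marked π x m) :
    ∀ i, 0 < i → i < m → ∃ q, q ≤ x ∧ conflict x q = true ∧ Marked π q i := by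
  unfold Marked ggMarks at h ⊢
  rcases ggAux_complete (π.parts.reverse) [] (parts_reverse_sorted π) (by simp) x m h with h' | h'
  · simp at h'
  · exact h'

lemma pairwise_or {α : Type*} {R : α → α → Prop} :
    ∀ {l : List α}, l.Pairwise R → ∀ {a b : α}, a ∈ l → b ∈ l → a ≠ b → R a b ∨ R b a := by
  intro l h
  induction h with
  | nil => intro a b ha _ _; simp at ha
  | @cons c l' hr _ ih =>
      intro a b ha hb hab
      rcases List.mem_cons.mp ha with rfl | ha2
      · rcases List.mem_cons.mp hb with h' | hb
        · exact absurd h'.symm hab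
        · exact Or.inl (hr b hb)
      · rcases List.mem_cons.mp hb with h' | hb
        · subst h'; exact Or.inr (hr a ha2)
        · exact ih ha2 hb hab

lemma natE_le_natE {a b : ℕ} : natE a ≤ natE b ↔ a ≤ b := by
  simp [natE]

lemma natE_lt_natE {a b : ℕ} : natE a < natE b ↔ a < b := by
  simp [natE]

lemma not_natE_le_bot (a : ℕ) : ¬ natE a ≤ ⊥ := by
  simp [natE]
  exact EReal.natCast_ne_bot a

lemma sorted_ge_getElem {s : List ℕ} (h : s.Pairwise (· ≥ ·)) {i j : ℕ}
    (hi : i < s.length) (hj : j < s.length) (hij : i ≤ j) : s[j] ≤ s[i] := by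
  rcases eq_or_lt_of_le hij with rfl | hlt
  · exact le_refl _
  · have := List.pairwise_iff_get.mp h ⟨i, hi⟩ ⟨j, hj⟩ hlt
    simpa using this

lemma startPair_snd_cases (π : Partition) (b : ℕ) :
    (startPair π (b + 1)).2 = 0 ∨ (startPair π (b + 1)).2 = nth π 2 (b + 1) - 1 ∨
    (startPair π (b + 1)).2 = nth π 2 (b + 1) - 2 ∨
    (startPair π (b + 1)).2 = nth π 2 (b + 1) + 2 ∨
    (startPair π (b + 1)).2 = nth π 2 (b + 1) := by
  simp only [startPair]
  repeat' split
  all_goals simp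

/-- Lemma 2.6: if `π ∈ C_<(k,r|p,t)` and `π^{(2)}_p ≥ 2t + 6`, then the marks
of the parts `2t+2` and `2t+4` in `GG(π)` are at most `1`. -/
theorem marks_le_one_of_ge (k r p t : ℕ) (hrk : r ≤ k) (hr : 3 ≤ r)
    (π : Partition) (hπ : π ∈ Clt k r p t)
    (hge : natE (2 * t + 6) ≤ rowVal π 2 p) :
    ∀ m, (Marked π (2 * t + 2) m ∨ Marked π (2 * t + 4) m) → m ≤ 1 := by
  obtain ⟨-, hoddlt, hlt1, -, -, hst01⟩ := hπ
  intro m hm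
  by_contra hm1
  push_neg at hm1
  set s := row π 2 with hs
  have hsort : s.Pairwise (· ≥ ·) := row_sorted π 2
  have hrv1 : rowVal π 2 (p + 1) = (match s[p]? with | some x => natE x | none => ⊥) := by
    rw [rowVal, if_neg (Nat.succ_ne_zero p)]
    simp [hs]
  have hP1 : ∀ w, s[p]? = some w → w ≤ 2 * t := by
    intro w hw
    rw [hrv1, hw] at hlt1
    have := natE_lt_natE.mp hlt1
    omega
  have hPv : p ≠ 0 → ∃ v, s[p - 1]? = some v ∧ 2 * t + 6 ≤ v := by
    intro hp0
    have hrvp : rowVal π 2 p = (match s[p - 1]? with | some x => natE x | none => ⊥) := by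
      rw [rowVal, if_neg hp0]
    rw [hrvp] at hge
    rcases h' : s[p - 1]? with _ | v
    · rw [h'] at hge
      exact absurd hge (not_natE_le_bot _)
    · rw [h'] at hge
      exact ⟨v, rfl, natE_le_natE.mp hge⟩
  have hbound : ∀ a ∈ s, a ≤ 2 * t ∨ 2 * t + 6 ≤ a := by
    intro a ha
    obtain ⟨j, hj, rfl⟩ := List.mem_iff_getElem.mp ha
    by_cases hjp : j < p
    · obtain ⟨v, hv, hv6⟩ := hPv (by omega)
      obtain ⟨hplen, hveq⟩ := List.getElem?_eq_some_iff.mp hv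
      have h2 := sorted_ge_getElem hsort hj hplen (by omega)
      right
      omega
    · have hplen : p < s.length := by omega
      have h1 := hP1 _ (List.getElem?_eq_getElem hplen)
      have h2 := sorted_ge_getElem hsort hplen hj (by omega)
      left
      omega
  -- a 2-marked part within distance 2 below x exists
  have key2 : ∀ x, Marked π x m → x % 2 = 0 → ∃ q, x - 2 ≤ q ∧ q ≤ x ∧ q ∈ s := by
    intro x hx hxe
    rcases eq_or_lt_of_le (show 2 ≤ m by omega) with h2 | h3
    · have hm2 : m = 2 := by omega
      exact ⟨x, by omega, le_rfl, marked_mem_row (show Marked π x 2 from hm2 ▸ hx)⟩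
    · obtain ⟨q, hq1, hq2, hq3⟩ := marked_complete hx 2 (by norm_num) h3
      unfold conflict at hq2
      rw [if_neg (by omega)] at hq2
      have hq2' : x - q ≤ 2 := by simpa using hq2
      exact ⟨q, by omega, hq1, marked_mem_row hq3⟩
  rcases hm with hm | hm
  case inr =>
    -- x = 2t + 4 : immediate contradiction
    obtain ⟨q, h1, h2, h3⟩ := key2 _ hm (by omega)
    rcases hbound q h3 with h | h <;> omega
  case inl =>
    -- x = 2t + 2
    obtain ⟨q, h1, h2, h3⟩ := key2 _ hm (by omega)
    have hq : q = 2 * t := by rcases hbound q h3 with h | h <;> omega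
    subst hq
    -- 2t sits exactly at position p+1 in the second row
    obtain ⟨j, hj, hjv⟩ := List.mem_iff_getElem.mp h3
    have hjp : ¬ j < p := by
      intro hjp
      obtain ⟨v, hv, hv6⟩ := hPv (by omega)
      obtain ⟨hplen, hveq⟩ := List.getElem?_eq_some_iff.mp hv
      have h2' := sorted_ge_getElem hsort hj hplen (by omega)
      omega
    have hplen : p < s.length := by omega
    have hsp : s[p]? = some (2 * t) := by
      rw [List.getElem?_eq_getElem hplen]
      have hle1 := hP1 _ (List.getElem?_eq_getElem hplen)
      have hle2 := sorted_ge_getElem hsort hplen hj (by omega)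
      exact congrArg some (by omega)
    have hrveq : rowVal π 2 (p + 1) = natE (2 * t) := by rw [hrv1, hsp]
    have hstart := hst01 hrveq
    have hnth : nth π 2 (p + 1) = 2 * t := by
      rw [nth, List.getD_eq_getElem?_getD]
      simp only [Nat.add_sub_cancel, ← hs, hsp, Option.getD_some]
    -- the 1-marked conflicting part
    obtain ⟨q1, hq11, hq12, hq13⟩ := marked_complete hm 1 one_pos hm1
    unfold conflict at hq12
    rw [if_neg (by omega)] at hq12
    have hq12' : 2 * t + 2 - q1 ≤ 2 := by simpa using hq12
    have hq1parts := marked_mem_parts hq13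
    have hq1ne : q1 ≠ 2 * t + 1 := by
      intro h
      have := hoddlt q1 hq1parts (by omega)
      omega
    have hxparts : (2 * t + 2) ∈ π.parts := marked_mem_parts hm
    -- the core contradiction, given a small 1-marked part and no 1-marked 2t+2
    have hcore : ∀ w, Marked π w 1 → (w = 2 * t - 1 ∨ w = 2 * t - 2) →
        ¬ Marked π (2 * t + 2) 1 → False := by
      intro w hw hww hnm
      rcases Nat.eq_zero_or_pos t with rfl | ht
      · have := π.pos w (marked_mem_parts hw)
        omega
      rcases (show q1 = 2 * t ∨ q1 = 2 * t + 2 by omega) with hq1 | hq1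
      · subst hq1
        have hne : ((2 * t : ℕ), (1 : ℕ)) ≠ (w, 1) := by
          intro h
          injection h with h1 _
          omega
        have hcdir : conflict (2 * t) w = true := by
          unfold conflict
          rw [if_neg (by omega)]
          simp
          omega
        have hcrev : conflict w (2 * t) = true := by
          unfold conflict
          split
          · simp
            omega
          · simp
            omega
        rcases pairwise_or (ggMarks_good π) hq13 hw hne with h | h
        · exact h hcdir rfl
        · exact h hcrev rfl
      · exact hnm (hq1 ▸ hq13)
    -- the quantity s_p never equals 2t+2
    have hsp2 : (startPair π p).2 ≠ 2 * t + 2 := by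
      rcases Nat.eq_zero_or_pos p with rfl | hp1
      · have h0 : (startPair π 0).2 = 0 := rfl
        omega
      · obtain ⟨v, hv, hv6⟩ := hPv (by omega)
        obtain ⟨b', rfl⟩ : ∃ b', p = b' + 1 := ⟨p - 1, by omega⟩
        have hv' : s[b']? = some v := by simpa using hv
        have hnth' : nth π 2 (b' + 1) = v := by
          rw [nth, List.getD_eq_getElem?_getD]
          simp only [Nat.add_sub_cancel, ← hs, hv', Option.getD_some]
        rcases startPair_snd_cases π b' with h | h | h | h | h <;> omega
    -- unfold the starting-type condition for π^{(2)}_{p+1}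
    simp only [startType, startPair, hnth] at hstart
    repeat' split at hstart
    all_goals try (simp at hstart)
    all_goals rename_i hcnd
    all_goals rw [Bool.and_eq_true] at hcnd
    all_goals obtain ⟨ha, hb⟩ := hcnd
    all_goals refine hcore _ (of_decide_eq_true ha) ?_ ?_
    all_goals try (first | exact Or.inl rfl | exact Or.inr rfl)
    all_goals intro hM1
    all_goals simp only [Bool.or_eq_true, Bool.not_eq_true', decide_eq_false_iff_not,
      decide_eq_true_eq] at hb
    all_goals first
      | exact hb hxparts
      | (rcases hb with hb' | hb'
         · exact hb' hM1
         · exact hsp2 hb')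

end Bressoud
end
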